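/- Let n, m ∈ ℕ with n ≥ 2, and let g : Fin (n^m) → Fin (n^m) be a Costas permutation. Let V : Fin (n^m) → (Fin n)^m be base-n digit expansion. Then the dots {(V(i), V(g(i))) : i ∈ Fin (n^m)} form a permutation Costas hypercube of side n in 2m dimensions: (a) the map i ↦ V(i) is bijective, the map i ↦ V(g(i)) is bijective, and (b) the differences (V(i)−V(j), V(g(i))−V(g(j))) over distinct pairs (i,j) are pairwise distinct. -/
import Mathlib


/-- Base-`n` digit expansion of `i ∈ Fin (n^m)` as a vector of digits in `Fin n`. -/
def baseDigits (n m : ℕ) (hn : 0 < n) (i : Fin (n ^ m)) : Fin m → Fin n :=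
  fun j => ⟨((i : ℕ) / n ^ (m - 1 - (j : ℕ))) % n, Nat.mod_lt _ hn⟩

/-- Base-`n` digit expansion as a vector in `ℤ^m`. -/
def baseDigitsZ (n m : ℕ) (i : ℕ) : Fin m → ℤ :=
  fun j => ((i / n ^ (m - 1 - (j : ℕ))) % n : ℕ)


lemma digit_sum (n m i : ℕ) :
    ∑ k ∈ Finset.range m, (i / n ^ k % n) * n ^ k = i % n ^ m := by
  induction m with
  | zero => simp [Nat.mod_one]
  | succ m ih =>
    rw [Finset.sum_range_succ, ih, pow_succ, Nat.mod_mul]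
    ring

lemma sum_baseDigitsZ (n m : ℕ) (i : Fin (n ^ m)) :
    ∑ k : Fin m, baseDigitsZ n m i k * (n : ℤ) ^ (m - 1 - (k : ℕ)) = ((i : ℕ) : ℤ) := by
  have h1 : ∑ k ∈ Finset.range m, ((i : ℕ) / n ^ (m - 1 - k) % n) * n ^ (m - 1 - k)
      = (i : ℕ) := by
    rw [Finset.sum_range_reflect (fun k => ((i : ℕ) / n ^ k % n) * n ^ k) m,
      digit_sum, Nat.mod_eq_of_lt i.isLt]
  calc ∑ k : Fin m, baseDigitsZ n m i k * (n : ℤ) ^ (m - 1 - (k : ℕ))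
      = ((∑ k ∈ Finset.range m,
          ((i : ℕ) / n ^ (m - 1 - k) % n) * n ^ (m - 1 - k) : ℕ) : ℤ) := by
        rw [← Fin.sum_univ_eq_sum_range
          (fun k => ((i : ℕ) / n ^ (m - 1 - k) % n) * n ^ (m - 1 - k)) m]
        push_cast [baseDigitsZ]
        rfl
    _ = ((i : ℕ) : ℤ) := by rw [h1]

lemma diff_sum (n m : ℕ) (i j : Fin (n ^ m)) :
    ∑ k : Fin m, (baseDigitsZ n m i k - baseDigitsZ n m j k) * (n : ℤ) ^ (m - 1 - (k : ℕ)) =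
      ((i : ℕ) : ℤ) - ((j : ℕ) : ℤ) := by
  simp [sub_mul, Finset.sum_sub_distrib, sum_baseDigitsZ]

lemma baseDigitsZ_inj (n m : ℕ) (i j : Fin (n ^ m))
    (h : baseDigitsZ n m i = baseDigitsZ n m j) : i = j := by
  have := sum_baseDigitsZ n m i
  rw [h, sum_baseDigitsZ n m j] at this
  exact (Fin.ext (by exact_mod_cast this)).symm

/-- Reshaping a Costas permutation of order `n^m` gives a permutation Costas
hypercube of side `n` in `2m` dimensions: both halves of the dot coordinates are
bijections, and the difference vectors over distinct pairs are pairwise distinct. -/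
theorem costas_hypercube_even_dimension (n m : ℕ) (hn : 2 ≤ n)
    (g : Equiv.Perm (Fin (n ^ m)))
    (hg : ∀ i j i' j' : Fin (n ^ m), i ≠ j → i' ≠ j' →
      (((i : ℕ) : ℤ) - ((j : ℕ) : ℤ), ((g i : ℕ) : ℤ) - ((g j : ℕ) : ℤ)) =
      (((i' : ℕ) : ℤ) - ((j' : ℕ) : ℤ), ((g i' : ℕ) : ℤ) - ((g j' : ℕ) : ℤ)) →
      i = i' ∧ j = j') :
    Function.Bijective (baseDigits n m (by omega)) ∧
    Function.Bijective (fun i => baseDigits n m (by omega) (g i)) ∧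
    (∀ i j i' j' : Fin (n ^ m), i ≠ j → i' ≠ j' →
      baseDigitsZ n m i - baseDigitsZ n m j =
        baseDigitsZ n m i' - baseDigitsZ n m j' →
      baseDigitsZ n m (g i) - baseDigitsZ n m (g j) =
        baseDigitsZ n m (g i') - baseDigitsZ n m (g j') →
      i = i' ∧ j = j') := by
  have hnn : 0 < n := by omega
  have hZ : ∀ (h : 0 < n) (i : Fin (n ^ m)), baseDigitsZ n m i =
      fun k => ((baseDigits n m h i k : ℕ) : ℤ) := by
    intro h i; rfl
  have hinj : ∀ (h : 0 < n), Function.Injective (baseDigits n m h) := by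
    intro h i j hij
    apply baseDigitsZ_inj n m
    rw [hZ h i, hZ h j, hij]
  have hcard : Nat.card (Fin (n ^ m)) = Nat.card (Fin m → Fin n) := by
    simp [Nat.card_fun]
  refine ⟨?_, ?_, ?_⟩
  · exact (Nat.bijective_iff_injective_and_card _).2 ⟨hinj _, by simp [hcard]⟩
  · exact (Nat.bijective_iff_injective_and_card _).2
      ⟨(hinj _).comp g.injective, by simp [hcard]⟩
  · intro i j i' j' hij hij' h1 h2
    have e1 : ((i : ℕ) : ℤ) - ((j : ℕ) : ℤ) = ((i' : ℕ) : ℤ) - ((j' : ℕ) : ℤ) := by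
      rw [← diff_sum n m i j, ← diff_sum n m i' j']
      exact Finset.sum_congr rfl fun k _ => by
        rw [show baseDigitsZ n m i k - baseDigitsZ n m j k
            = baseDigitsZ n m i' k - baseDigitsZ n m j' k from congrFun h1 k]
    have e2 : ((g i : ℕ) : ℤ) - ((g j : ℕ) : ℤ) = ((g i' : ℕ) : ℤ) - ((g j' : ℕ) : ℤ) := by
      rw [← diff_sum n m (g i) (g j), ← diff_sum n m (g i') (g j')]
      exact Finset.sum_congr rfl fun k _ => by
        rw [show baseDigitsZ n m (g i) k - baseDigitsZ n m (g j) k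
            = baseDigitsZ n m (g i') k - baseDigitsZ n m (g j') k from congrFun h2 k]
    exact hg i j i' j' hij hij' (by rw [e1, e2])
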